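/- Under a one-factor model Σ = σ²ββᵀ + Δ with β nondecreasing and Σ_j β_j/δ_j² > 0, the long-only minimum variance portfolio w satisfies: w_i > 0 if and only if β_i < (1/σ² + Σ_{j=1}^k β_j²/δ_j²) / (Σ_{j=1}^k β_j/δ_j²), where k = |{i : w_i > 0}| and the active set equals {1,…,k}. -/

import Mathlib

open Matrix

theorem initial_segment {p : ℕ} (K : Finset (Fin p))
    (hdc : ∀ i j : Fin p, j ≤ i → i ∈ K → j ∈ K) (i : Fin p) :
    i ∈ K ↔ (i : ℕ) < K.card := by
  constructor
  · intro hi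
    have hsub : Finset.Iic i ⊆ K := fun j hj => hdc i j (Finset.mem_Iic.mp hj) hi
    have := Finset.card_le_card hsub
    rw [Fin.card_Iic] at this
    omega
  · intro hlt
    by_contra hi
    have hsub : K ⊆ Finset.Iio i := by
      intro j hj
      rw [Finset.mem_Iio]
      by_contra hij
      exact hi (hdc j i (not_lt.mp hij) hj)
    have := Finset.card_le_card hsub
    rw [Fin.card_Iio] at this
    omega

set_option maxHeartbeats 1000000 in
theorem stmt11 {p : ℕ} (β δ : Fin p → ℝ) (σ : ℝ)
    (hβ : Monotone β) (hδ : ∀ i, 0 < δ i) (hσ : 0 < σ)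
    (hsum : 0 < ∑ j, β j / (δ j) ^ 2)
    (S : Matrix (Fin p) (Fin p) ℝ)
    (hSdef : S = σ ^ 2 • (Matrix.of fun i j => β i * β j)
      + Matrix.diagonal (fun i => (δ i) ^ 2))
    (w : Fin p → ℝ) (hwsum : ∑ i, w i = 1) (hnn : ∀ i, 0 ≤ w i)
    (hmin : ∀ v : Fin p → ℝ, (∑ i, v i = 1) → (∀ i, 0 ≤ v i) →
      w ⬝ᵥ S *ᵥ w ≤ v ⬝ᵥ S *ᵥ v) :
    let K : Finset (Fin p) := Finset.univ.filter (fun i => 0 < w i)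
    let k : ℕ := K.card
    let BK : ℝ := 1 / σ ^ 2 + ∑ j ∈ Finset.univ.filter (fun j : Fin p => (j : ℕ) < k),
      (β j) ^ 2 / (δ j) ^ 2
    let CK : ℝ := ∑ j ∈ Finset.univ.filter (fun j : Fin p => (j : ℕ) < k),
      β j / (δ j) ^ 2
    (∀ i : Fin p, i ∈ K ↔ (i : ℕ) < k) ∧
    (∀ i : Fin p, 0 < w i ↔ β i < BK / CK) := by
  intro K k BK CK
  -- quadratic form as explicit sums
  set F : (Fin p → ℝ) → ℝ :=
    fun v => σ ^ 2 * (∑ x, β x * v x) ^ 2 + ∑ x, (δ x) ^ 2 * (v x) ^ 2 with hFdef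
  have hF : ∀ v : Fin p → ℝ, v ⬝ᵥ S *ᵥ v = F v := by
    intro v
    subst hSdef
    simp only [hFdef, dotProduct, Matrix.mulVec, Matrix.add_apply,
      Matrix.smul_apply, Matrix.of_apply, Matrix.diagonal_apply, smul_eq_mul]
    have hrow : ∀ i : Fin p,
        (∑ j, (σ ^ 2 * (β i * β j) + if i = j then (δ i) ^ 2 else 0) * v j)
        = σ ^ 2 * β i * (∑ j, β j * v j) + (δ i) ^ 2 * v i := by
      intro i
      rw [Finset.mul_sum]
      rw [show (∑ j, (σ ^ 2 * (β i * β j) + if i = j then (δ i) ^ 2 else 0) * v j)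
          = ∑ j, (σ ^ 2 * β i * (β j * v j) + (if i = j then (δ i) ^ 2 * v j else 0)) from
        Finset.sum_congr rfl (fun j _ => by by_cases h : i = j <;> simp [h] <;> ring)]
      rw [Finset.sum_add_distrib, Finset.sum_ite_eq, ← Finset.mul_sum]
      simp
    calc ∑ i, v i * (∑ j, (σ ^ 2 * (β i * β j) + if i = j then (δ i) ^ 2 else 0) * v j)
        = ∑ i, (σ ^ 2 * (∑ j, β j * v j) * (β i * v i) + (δ i) ^ 2 * (v i) ^ 2) := by
          refine Finset.sum_congr rfl (fun i _ => ?_)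
          rw [hrow i]; ring
      _ = σ ^ 2 * (∑ x, β x * v x) ^ 2 + ∑ x, (δ x) ^ 2 * (v x) ^ 2 := by
          rw [Finset.sum_add_distrib, ← Finset.mul_sum]; ring
  set b : ℝ := ∑ x, β x * w x with hbdef
  set g : Fin p → ℝ := fun i => σ ^ 2 * b * β i + (δ i) ^ 2 * w i with hgdef
  -- KKT condition
  have kkt : ∀ i j : Fin p, 0 < w i → g i ≤ g j := by
    intro i j hwi
    by_cases hij : i = j
    · subst hij; exact le_rfl
    by_contra hgt
    push_neg at hgt
    set X : ℝ := g j - g i with hXdef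
    have hX : X < 0 := by simp [hXdef]; linarith
    set Y : ℝ := σ ^ 2 * (β j - β i) ^ 2 + (δ j) ^ 2 + (δ i) ^ 2 with hYdef
    have hY : 0 < Y := by
      have h1 := pow_pos (hδ i) 2
      have h2 := pow_pos (hδ j) 2
      have h3 : 0 ≤ σ ^ 2 * (β j - β i) ^ 2 := by positivity
      simp only [hYdef]; linarith
    set t : ℝ := min (w i) (-X / Y) with htdef
    have ht0 : 0 < t := lt_min hwi (div_pos (by linarith) hY)
    have hti : t ≤ w i := min_le_left _ _
    have htY : t * Y ≤ -X := by
      have := min_le_right (w i) (-X / Y)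
      calc t * Y ≤ (-X / Y) * Y := by
            apply mul_le_mul_of_nonneg_right _ (le_of_lt hY)
            simpa [htdef] using this
        _ = -X := by field_simp
    set d : Fin p → ℝ := fun x => (if x = j then 1 else 0) - (if x = i then 1 else 0)
      with hddef
    have hdi : d i = -1 := by simp [hddef, hij]
    have hdj : d j = 1 := by
      have : ¬ (j = i) := fun h => hij h.symm
      simp [hddef, this]
    have hdo : ∀ x, x ≠ i → x ≠ j → d x = 0 := by
      intro x h1 h2
      simp [hddef, h1, h2]
    have sum_d : ∀ f : Fin p → ℝ, (∑ x, f x * d x) = f j - f i := by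
      intro f
      simp [hddef, mul_sub, mul_ite, Finset.sum_sub_distrib]
    have hd2 : ∀ x : Fin p, (d x) ^ 2
        = (if x = j then 1 else 0) + (if x = i then 1 else 0) := by
      intro x
      by_cases h1 : x = j
      · rw [if_pos h1, if_neg (fun h2 : x = i => hij (h2.symm.trans h1)), h1, hdj]
        norm_num
      · by_cases h2 : x = i
        · rw [if_neg h1, if_pos h2, h2, hdi]
          norm_num
        · rw [if_neg h1, if_neg h2, hdo x h2 h1]
          norm_num
    have sum_d2 : ∀ f : Fin p → ℝ, (∑ x, f x * (d x) ^ 2) = f j + f i := by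
      intro f
      rw [Finset.sum_congr rfl (fun x _ => by rw [hd2 x, mul_add] :
        ∀ x ∈ Finset.univ, f x * (d x) ^ 2
          = f x * (if x = j then 1 else 0) + f x * (if x = i then 1 else 0)),
        Finset.sum_add_distrib]
      simp [mul_ite, Finset.sum_ite_eq']
    set v : Fin p → ℝ := fun x => w x + t * d x with hvdef
    have hvi : v i = w i - t := by
      simp only [hvdef]
      rw [hdi]; ring
    have hvj : v j = w j + t := by
      simp only [hvdef]
      rw [hdj]; ring
    have hvo : ∀ x, x ≠ i → x ≠ j → v x = w x := by
      intro x h1 h2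
      simp only [hvdef]
      rw [hdo x h1 h2]; ring
    have hvsum : ∑ x, v x = 1 := by
      have hd0 : (∑ x, d x) = 0 := by
        have h := sum_d (fun _ => (1:ℝ))
        simpa using h
      simp only [hvdef, Finset.sum_add_distrib, hwsum, ← Finset.mul_sum, hd0,
        mul_zero, add_zero]
    have hvnn : ∀ x, 0 ≤ v x := by
      intro x
      by_cases h1 : x = i
      · subst h1; rw [hvi]; linarith
      by_cases h2 : x = j
      · subst h2; rw [hvj]; linarith [hnn x]
      · rw [hvo x h1 h2]; exact hnn x
    have hexp : F v = F w + 2 * t * X + t ^ 2 * Y := by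
      have e1 : (∑ x, β x * v x) = b + t * (β j - β i) := by
        simp only [hvdef]
        rw [show (∑ x, β x * (w x + t * d x)) = ∑ x, (β x * w x + t * (β x * d x)) from
          Finset.sum_congr rfl (fun x _ => by ring)]
        rw [Finset.sum_add_distrib, ← Finset.mul_sum, sum_d β, hbdef]
      have e2 : (∑ x, (δ x) ^ 2 * (v x) ^ 2)
          = (∑ x, (δ x) ^ 2 * (w x) ^ 2)
            + 2 * t * ((δ j) ^ 2 * w j - (δ i) ^ 2 * w i)
            + t ^ 2 * ((δ j) ^ 2 + (δ i) ^ 2) := by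
        simp only [hvdef]
        rw [show (∑ x, (δ x) ^ 2 * (w x + t * d x) ^ 2)
            = ∑ x, ((δ x) ^ 2 * (w x) ^ 2 + (2 * t) * (((δ x) ^ 2 * w x) * d x)
              + t ^ 2 * ((δ x) ^ 2 * (d x) ^ 2)) from
          Finset.sum_congr rfl (fun x _ => by ring)]
        rw [Finset.sum_add_distrib, Finset.sum_add_distrib, ← Finset.mul_sum, ← Finset.mul_sum,
          sum_d (fun x => (δ x) ^ 2 * w x), sum_d2 (fun x => (δ x) ^ 2)]
      simp only [hFdef]
      rw [e1, e2]
      simp only [hXdef, hYdef, hgdef]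
      ring
    have hle := hmin v hvsum hvnn
    rw [hF w, hF v, hexp] at hle
    nlinarith [mul_le_mul_of_nonneg_left htY (le_of_lt ht0),
      mul_neg_of_pos_of_neg ht0 hX]
  -- some active index exists
  have hKne : ∃ i, 0 < w i := by
    by_contra h
    push_neg at h
    have : ∀ i : Fin p, w i = 0 := fun i => le_antisymm (h i) (hnn i)
    simp [this] at hwsum
  obtain ⟨i₀, hi₀⟩ := hKne
  set lam : ℝ := g i₀ with hlamdef
  have hlam_active : ∀ i, 0 < w i → g i = lam :=
    fun i hi => le_antisymm (kkt i i₀ hi) (kkt i₀ i hi₀)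
  have hlam_le : ∀ j, lam ≤ g j := fun j => kkt i₀ j hi₀
  -- lam = wᵀΣw > 0
  have hlam_pos : 0 < lam := by
    have hsumwg : (∑ i, w i * g i) = lam := by
      rw [show (∑ i, w i * g i) = ∑ i, w i * lam from
        Finset.sum_congr rfl (fun i _ => by
          rcases eq_or_lt_of_le (hnn i) with h | h
          · rw [← h]; ring
          · rw [hlam_active i h])]
      rw [← Finset.sum_mul, hwsum, one_mul]
    have hsplit : (∑ i, w i * g i) = σ ^ 2 * b ^ 2 + ∑ i, (δ i) ^ 2 * (w i) ^ 2 := by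
      rw [show (∑ i, w i * g i)
          = ∑ i, (σ ^ 2 * b * (β i * w i) + (δ i) ^ 2 * (w i) ^ 2) from
        Finset.sum_congr rfl (fun i _ => by simp only [hgdef]; ring)]
      rw [Finset.sum_add_distrib, ← Finset.mul_sum, ← hbdef]
      ring
    have hpos : 0 < ∑ i, (δ i) ^ 2 * (w i) ^ 2 := by
      apply Finset.sum_pos' (fun i _ => by positivity)
      exact ⟨i₀, Finset.mem_univ _, mul_pos (pow_pos (hδ i₀) 2) (pow_pos hi₀ 2)⟩
    nlinarith [sq_nonneg b, sq_nonneg σ]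
  -- characterization via threshold on σ²bβ
  have hchar : ∀ i, 0 < w i ↔ σ ^ 2 * b * β i < lam := by
    intro i
    constructor
    · intro hi
      have := hlam_active i hi
      simp only [hgdef] at this
      nlinarith [pow_pos (hδ i) 2]
    · intro hi
      rcases eq_or_lt_of_le (hnn i) with h | h
      · exfalso
        have := hlam_le i
        simp only [hgdef, ← h] at this
        linarith
      · exact h
  -- active-set identities
  have hwK : ∀ x ∈ K, (δ x) ^ 2 * w x = lam - σ ^ 2 * b * β x := by
    intro x hx
    have hx' : 0 < w x := (Finset.mem_filter.mp hx).2
    have := hlam_active x hx'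
    simp only [hgdef] at this
    linarith
  have hbK : b = ∑ x ∈ K, β x * w x := by
    rw [hbdef]
    symm
    apply Finset.sum_subset (Finset.subset_univ K)
    intro x _ hx
    have : w x = 0 := by
      by_contra h
      exact hx (Finset.mem_filter.mpr ⟨Finset.mem_univ _, lt_of_le_of_ne (hnn x) (Ne.symm h)⟩)
    rw [this, mul_zero]
  set Bv : ℝ := ∑ x ∈ K, (β x) ^ 2 / (δ x) ^ 2 with hBvdef
  set Cv : ℝ := ∑ x ∈ K, β x / (δ x) ^ 2 with hCvdef
  have hident : σ ^ 2 * b * (1 / σ ^ 2 + Bv) = lam * Cv := by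
    have : b = lam * Cv - σ ^ 2 * b * Bv := by
      conv_lhs => rw [hbK]
      rw [hBvdef, hCvdef, Finset.mul_sum, Finset.mul_sum, ← Finset.sum_sub_distrib]
      refine Finset.sum_congr rfl (fun x hx => ?_)
      have h := hwK x hx
      have hδx : (δ x) ^ 2 ≠ 0 := ne_of_gt (pow_pos (hδ x) 2)
      have hw : w x = (lam - σ ^ 2 * b * β x) / (δ x) ^ 2 :=
        eq_div_of_mul_eq hδx (by rw [mul_comm]; exact h)
      rw [hw]; ring
    have e : σ ^ 2 * b * (1 / σ ^ 2) = b := by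
      field_simp
    rw [mul_add, e]
    linarith
  have hBv_pos : 0 < 1 / σ ^ 2 + Bv := by
    have : 0 ≤ Bv := Finset.sum_nonneg (fun x _ => by positivity)
    have : 0 < 1 / σ ^ 2 := by positivity
    linarith [Finset.sum_nonneg (fun x (_ : x ∈ K) =>
      (by positivity : (0:ℝ) ≤ (β x) ^ 2 / (δ x) ^ 2))]
  clear_value F b g lam Bv Cv
  -- b > 0
  have hb_pos : 0 < b := by
    rcases lt_trichotomy b 0 with hb | hb | hb
    · exfalso
      have hσb_neg : σ ^ 2 * b < 0 := mul_neg_of_pos_of_neg (pow_pos hσ 2) hb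
      have hCv_neg : Cv < 0 := by
        have hlhs : σ ^ 2 * b * (1 / σ ^ 2 + Bv) < 0 :=
          mul_neg_of_neg_of_pos hσb_neg hBv_pos
        by_contra hc
        push_neg at hc
        have : 0 ≤ lam * Cv := mul_nonneg hlam_pos.le hc
        linarith
      have hcomp : (∑ x ∈ Finset.univ.filter (fun x => ¬ 0 < w x), β x / (δ x) ^ 2) ≤ 0 := by
        apply Finset.sum_nonpos
        intro x hx
        have hwx : w x = 0 :=
          le_antisymm (not_lt.mp (Finset.mem_filter.mp hx).2) (hnn x)
        have hle := hlam_le x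
        simp only [hgdef, hwx] at hle
        have hβx : β x < 0 := by
          by_contra hge
          push_neg at hge
          nlinarith [mul_nonneg (le_of_lt (pow_pos hσ 2)) hge]
        have hδ2 : (0:ℝ) < (δ x) ^ 2 := pow_pos (hδ x) 2
        exact le_of_lt (div_neg_of_neg_of_pos hβx hδ2)
      have hsplitsum : Cv + (∑ x ∈ Finset.univ.filter (fun x => ¬ 0 < w x),
          β x / (δ x) ^ 2) = ∑ j, β j / (δ j) ^ 2 := by
        rw [hCvdef]
        exact Finset.sum_filter_add_sum_filter_not Finset.univ _ _
      linarith
    · exfalso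
      have hall : ∀ x : Fin p, 0 < w x := by
        intro x
        rw [hchar x]
        have : σ ^ 2 * b * β x = 0 := by rw [hb]; ring
        rw [this]
        exact hlam_pos
      have hKuniv : K = Finset.univ := by
        apply Finset.eq_univ_of_forall
        intro x
        exact Finset.mem_filter.mpr ⟨Finset.mem_univ _, hall x⟩
      have hCv_eq : Cv = ∑ j, β j / (δ j) ^ 2 := by rw [hCvdef, hKuniv]
      have : lam * Cv = 0 := by rw [← hident, hb]; ring
      rw [hCv_eq] at this
      nlinarith [mul_pos hlam_pos hsum]
    · exact hb
  have hCv_pos : 0 < Cv := by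
    have h1 : 0 < σ ^ 2 * b * (1 / σ ^ 2 + Bv) :=
      mul_pos (mul_pos (pow_pos hσ 2) hb_pos) hBv_pos
    by_contra hc
    push_neg at hc
    have : lam * Cv ≤ 0 := mul_nonpos_iff.mpr (Or.inl ⟨hlam_pos.le, hc⟩)
    linarith
  -- threshold characterization
  have hthr : ∀ i, 0 < w i ↔ β i < (1 / σ ^ 2 + Bv) / Cv := by
    intro i
    rw [hchar i]
    have hσb : 0 < σ ^ 2 * b := mul_pos (pow_pos hσ 2) hb_pos
    rw [lt_div_iff₀ hCv_pos]
    constructor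
    · intro h
      nlinarith [mul_lt_mul_of_pos_right h hCv_pos, hident, hσb]
    · intro h
      nlinarith [mul_lt_mul_of_pos_left h hσb, hident, hCv_pos]
  -- K is downward closed, hence an initial segment
  have hdc : ∀ i j : Fin p, j ≤ i → i ∈ K → j ∈ K := by
    intro i j hji hi
    have hi' : 0 < w i := (Finset.mem_filter.mp hi).2
    refine Finset.mem_filter.mpr ⟨Finset.mem_univ _, ?_⟩
    rw [hthr j]
    exact lt_of_le_of_lt (hβ hji) ((hthr i).mp hi')
  have hmem : ∀ i : Fin p, i ∈ K ↔ (i : ℕ) < k := fun i => initial_segment K hdc i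
  refine ⟨hmem, ?_⟩
  have hKfilt : Finset.univ.filter (fun j : Fin p => (j : ℕ) < k) = K := by
    ext x
    simp only [Finset.mem_filter, Finset.mem_univ, true_and]
    exact (hmem x).symm
  intro i
  have hBK : BK = 1 / σ ^ 2 + Bv := by
    show (1 / σ ^ 2 + ∑ j ∈ Finset.univ.filter (fun j : Fin p => (j : ℕ) < k),
      (β j) ^ 2 / (δ j) ^ 2) = 1 / σ ^ 2 + Bv
    rw [hKfilt, hBvdef]
  have hCK : CK = Cv := by
    show (∑ j ∈ Finset.univ.filter (fun j : Fin p => (j : ℕ) < k),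
      β j / (δ j) ^ 2) = Cv
    rw [hKfilt, hCvdef]
  rw [hBK, hCK]
  exact hthr i
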